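/- Let Q be a symmetric bilinear form with the Hodge-Riemann property on a finite-dimensional real vector space V, and let β ∈ V satisfy Q(β, β) > 0. Then for α ∈ V, equality Q(α, α) · Q(β, β) = Q(α, β)² holds if and only if α is a scalar multiple of β. -/

import Mathlib

/-- A symmetric bilinear form `Q` on a finite-dimensional real vector space has the
*Hodge-Riemann property* if it is nondegenerate and has exactly one positive
eigenvalue, i.e. there is a vector `v` with `Q v v > 0` and a codimension-one
subspace on which `Q` is negative definite (signature `(+,−,…,−)`). -/
def HodgeRiemann {V : Type*} [AddCommGroup V] [Module ℝ V]
    (Q : V →ₗ[ℝ] V →ₗ[ℝ] ℝ) : Prop :=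
  (∀ v : V, (∀ w : V, Q v w = 0) → v = 0) ∧
    (∃ v : V, 0 < Q v v) ∧
    ∃ W : Submodule ℝ V, Module.finrank ℝ W + 1 = Module.finrank ℝ V ∧
      ∀ w ∈ W, w ≠ 0 → Q w w < 0

lemma neg_on_orth {V : Type*} [AddCommGroup V] [Module ℝ V] [FiniteDimensional ℝ V]
    (Q : V →ₗ[ℝ] V →ₗ[ℝ] ℝ) (hsymm : ∀ v v' : V, Q v v' = Q v' v)
    (hQ : HodgeRiemann Q) (β : V) (hβ : 0 < Q β β) (γ : V) (hγβ : Q γ β = 0)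
    (hγ : γ ≠ 0) : Q γ γ < 0 := by
  obtain ⟨-, -, W, hWdim, hWneg⟩ := hQ
  by_contra h
  push_neg at h
  -- β and γ are linearly independent
  have hind : LinearIndependent ℝ ![β, γ] := by
    rw [LinearIndependent.pair_iff]
    intro a b hab
    have h1 : Q (a • β + b • γ) β = 0 := by rw [hab]; simp
    simp only [map_add, map_smul, LinearMap.add_apply, LinearMap.smul_apply,
      smul_eq_mul, hγβ] at h1
    have ha : a = 0 := by
      have := hβ.ne'
      nlinarith
    subst ha
    simp only [zero_smul, zero_add] at hab
    rcases smul_eq_zero.mp hab with hb | h0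
    · exact ⟨rfl, hb⟩
    · exact absurd h0 hγ
  have hU : Module.finrank ℝ (Submodule.span ℝ (Set.range ![β, γ])) = 2 := by
    rw [finrank_span_eq_card hind]
    simp
  set U := Submodule.span ℝ (Set.range ![β, γ]) with hUdef
  have hle : Module.finrank ℝ (U ⊔ W : Submodule ℝ V) ≤ Module.finrank ℝ V :=
    Submodule.finrank_le _
  have hsum := Submodule.finrank_sup_add_finrank_inf_eq U W
  have hpos : 0 < Module.finrank ℝ (U ⊓ W : Submodule ℝ V) := by omega
  have hne_bot : (U ⊓ W : Submodule ℝ V) ≠ ⊥ := by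
    intro hbot
    rw [hbot, finrank_bot] at hpos
    exact lt_irrefl 0 hpos
  obtain ⟨w, hwmem, hw0⟩ := Submodule.exists_mem_ne_zero_of_ne_bot hne_bot
  · have hwU : w ∈ U := hwmem.1
    have hwW : w ∈ W := hwmem.2
    have hrange : Set.range ![β, γ] = {β, γ} := by
      ext x
      simp [Fin.exists_fin_two, or_comm]
    rw [hUdef, hrange, Submodule.mem_span_pair] at hwU
    obtain ⟨a, b, hab⟩ := hwU
    have hQw : Q w w = a^2 * Q β β + b^2 * Q γ γ := by
      rw [← hab]
      simp only [map_add, map_smul, LinearMap.add_apply, LinearMap.smul_apply, smul_eq_mul,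
        hγβ, hsymm β γ, hγβ]
      ring
    have hlt := hWneg w hwW hw0
    nlinarith [sq_nonneg a, sq_nonneg b]

/-- for a symmetric bilinear form `Q` with the Hodge-Riemann property and
`β` with `Q β β > 0`, equality `Q α α * Q β β = (Q α β)²` holds if and only if `α` is a
scalar multiple of `β`. -/
theorem hodge_index_equality_iff
    {V : Type*} [AddCommGroup V] [Module ℝ V] [FiniteDimensional ℝ V]
    (Q : V →ₗ[ℝ] V →ₗ[ℝ] ℝ) (hsymm : ∀ v v' : V, Q v v' = Q v' v)
    (hQ : HodgeRiemann Q) (β : V) (hβ : 0 < Q β β) (α : V) :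
    Q α α * Q β β = (Q α β) ^ 2 ↔ ∃ c : ℝ, α = c • β := by
  have hβne : Q β β ≠ 0 := hβ.ne'
  constructor
  · intro heq
    set c : ℝ := Q α β / Q β β with hc
    set γ : V := α - c • β with hγdef
    have hγβ : Q γ β = 0 := by
      simp only [hγdef, map_sub, map_smul, LinearMap.sub_apply, LinearMap.smul_apply,
        smul_eq_mul, hc]
      field_simp
      ring
    have hγγ : Q γ γ = 0 := by
      have hexp : Q γ γ = Q α α - c * Q β α - c * Q α β + c^2 * Q β β := by
        simp only [hγdef, map_sub, map_smul, LinearMap.sub_apply, LinearMap.smul_apply,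
          smul_eq_mul]
        ring
      rw [hexp, hsymm β α, hc]
      field_simp
      nlinarith
    have hγ0 : γ = 0 := by
      by_contra h
      exact absurd hγγ (neg_on_orth Q hsymm hQ β hβ γ hγβ h).ne
    exact ⟨c, by rw [← sub_eq_zero]; exact hγ0⟩
  · rintro ⟨c, rfl⟩
    simp only [map_smul, LinearMap.smul_apply, smul_eq_mul]
    ring
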